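/- Let n ≥ 1, let k be an integer with 0 ≤ k ≤ n, let s ≥ 0 be an integer with (s = 0 if and only if k = n allowed), and let a > 0, b > 0. Then the ratio [∫₀^∞ ∫₀^1 (p + (1−p)e^{−λ})^k (1−p)^{n−k} e^{−(n−k)λ} λ^s g(λ|a,b) dp dλ] / [∫₀^∞ e^{−nλ} λ^s g(λ|a,b) dλ] equals (k!/(n+1)!) · Σ_{j=0}^{k} ((n−j)!/(k−j)!) · (1 − j/(n+b))^{−(s+a)}, and both integrals are finite. -/

import Mathlib

open MeasureTheory Real Set ENNReal

lemma fact_prod (m r : ℕ) :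
    (m.factorial * ∏ j ∈ Finset.range (r + 1), (m + 1 + j) ) = (m + r + 1).factorial := by
  induction r with
  | zero => rw [Finset.prod_range_one, add_zero, add_zero, Nat.factorial_succ, mul_comm]
  | succ r ih =>
    rw [Finset.prod_range_succ, ← mul_assoc, ih,
      show m + (r+1) + 1 = (m + r + 1) + 1 by ring, Nat.factorial_succ, mul_comm]
    congr 1
    omega

lemma beta_nat (m r : ℕ) :
    ∫ x in (0:ℝ)..1, x ^ m * (1 - x) ^ r
      = (m.factorial * r.factorial : ℝ) / ((m + r + 1).factorial : ℝ) := by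
  have hu : 0 < Complex.re ((m : ℂ) + 1) := by simp; positivity
  have h := Complex.betaIntegral_eval_nat_add_one_right hu r
  rw [Complex.betaIntegral] at h
  have h2 : (∫ x in (0:ℝ)..1, ((x:ℂ)) ^ ((m:ℂ)+1-1) * ((1:ℂ)-x) ^ (((r:ℂ)+1)-1))
      = ((∫ x in (0:ℝ)..1, x ^ m * (1 - x) ^ r : ℝ) : ℂ) := by
    rw [← intervalIntegral.integral_ofReal]
    refine intervalIntegral.integral_congr fun x hx => ?_
    push_cast
    rw [add_sub_cancel_right, add_sub_cancel_right, Complex.cpow_natCast, Complex.cpow_natCast]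
  rw [h2] at h
  have h3 : (∏ j ∈ Finset.range (r+1), ((m:ℂ) + 1 + j)) = ((∏ j ∈ Finset.range (r+1), (m+1+j) : ℕ) : ℂ) := by
    push_cast; ring_nf
  have hfact : ((m + r + 1).factorial : ℂ) = (m.factorial : ℂ) * ∏ j ∈ Finset.range (r+1), ((m:ℂ)+1+j) := by
    rw [h3, ← Nat.cast_mul, fact_prod]
  have hm : (m.factorial : ℂ) ≠ 0 := by exact_mod_cast Nat.factorial_ne_zero m
  have hfac2 : ((m+r+1).factorial : ℂ) ≠ 0 := by exact_mod_cast Nat.factorial_ne_zero _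
  have hprod : (∏ j ∈ Finset.range (r+1), ((m:ℂ)+1+j)) = ((m+r+1).factorial : ℂ) / (m.factorial : ℂ) := by
    rw [eq_div_iff hm, hfact, mul_comm]
  rw [hprod] at h
  have : ((∫ x in (0:ℝ)..1, x ^ m * (1 - x) ^ r : ℝ) : ℂ)
      = ((m.factorial * r.factorial : ℝ) / ((m + r + 1).factorial : ℝ) : ℝ) := by
    rw [h]
    push_cast
    field_simp
  exact_mod_cast this

lemma inner_int (n k : ℕ) (hk : k ≤ n) (E : ℝ) :
    ∫ x in (0:ℝ)..1, (x + (1-x)*E)^k * (1-x)^(n-k)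
      = ∑ j ∈ Finset.range (k+1),
          (k.factorial * (n-j).factorial : ℝ) / ((n+1).factorial * (k-j).factorial) * E^(k-j) := by
  have h1 : ∀ x : ℝ, (x + (1-x)*E)^k * (1-x)^(n-k)
      = ∑ j ∈ Finset.range (k+1), ((k.choose j : ℝ) * E^(k-j)) * (x^j * (1-x)^(n-j)) := by
    intro x
    rw [add_pow, Finset.sum_mul]
    refine Finset.sum_congr rfl fun j hj => ?_
    have hj' : j ≤ k := Nat.lt_succ_iff.mp (Finset.mem_range.mp hj)
    have hpow : (1-x)^(k-j) * (1-x)^(n-k) = (1-x)^(n-j) := by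
      rw [← pow_add]; congr 1; omega
    rw [mul_pow]
    calc x ^ j * ((1-x)^(k-j) * E^(k-j)) * (k.choose j : ℝ) * (1-x)^(n-k)
        = ((k.choose j : ℝ) * E^(k-j)) * (x^j * ((1-x)^(k-j) * (1-x)^(n-k))) := by ring
      _ = ((k.choose j : ℝ) * E^(k-j)) * (x^j * (1-x)^(n-j)) := by rw [hpow]
  simp_rw [h1]
  rw [intervalIntegral.integral_finset_sum
    (fun j _ => (Continuous.intervalIntegrable (by fun_prop) 0 1))]
  refine Finset.sum_congr rfl fun j hj => ?_
  have hj' : j ≤ k := Nat.lt_succ_iff.mp (Finset.mem_range.mp hj)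
  rw [intervalIntegral.integral_const_mul, beta_nat j (n-j),
    show j + (n-j) + 1 = n + 1 by omega]
  have hch : (k.choose j : ℝ) * (j.factorial : ℝ) * ((k-j).factorial : ℝ) = (k.factorial : ℝ) := by
    exact_mod_cast congrArg (Nat.cast : ℕ → ℝ) (Nat.choose_mul_factorial_mul_factorial hj')
  have hkj : ((k-j).factorial : ℝ) ≠ 0 := by exact_mod_cast Nat.factorial_ne_zero _
  have hn1 : (((n+1)).factorial : ℝ) ≠ 0 := by exact_mod_cast Nat.factorial_ne_zero _
  field_simp
  linear_combination E^(k-j) * hch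

lemma integrableOn_gamma_scaled {t r : ℝ} (ht : 0 < t) (hr : 0 < r) :
    IntegrableOn (fun x : ℝ => x ^ (t-1) * Real.exp (-(r*x))) (Ioi (0:ℝ)) := by
  have h0 := Real.GammaIntegral_convergent ht
  have h1 : IntegrableOn (fun x : ℝ => Real.exp (-(r*x)) * (r*x) ^ (t-1)) (Ioi (0:ℝ)) := by
    have := (integrableOn_Ioi_comp_mul_left_iff (fun x : ℝ => Real.exp (-x) * x ^ (t-1)) 0 hr).mpr
    simpa using this (by simpa using h0)
  have h2 : IntegrableOn (fun x : ℝ => (1/r)^(t-1) * (Real.exp (-(r*x)) * (r*x) ^ (t-1))) (Ioi (0:ℝ)) :=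
    h1.const_mul ((1/r) ^ (t-1))
  refine h2.congr_fun (fun x hx => ?_) measurableSet_Ioi
  have hx0 : (0:ℝ) < x := hx
  dsimp only
  rw [Real.mul_rpow hr.le hx0.le, Real.div_rpow zero_le_one hr.le, Real.one_rpow]
  field_simp [(Real.rpow_pos_of_pos hr _).ne']

lemma glint {t r : ℝ} (ht : 0 < t) (hr : 0 < r) :
    ∫⁻ x in Ioi (0:ℝ), ENNReal.ofReal (x ^ (t-1) * Real.exp (-(r*x)))
      = ENNReal.ofReal ((1/r) ^ t * Real.Gamma t) := by
  rw [← Real.integral_rpow_mul_exp_neg_mul_Ioi ht hr]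
  rw [← ofReal_integral_eq_lintegral_ofReal (integrableOn_gamma_scaled ht hr)]
  filter_upwards [ae_restrict_mem measurableSet_Ioi] with x hx
  have hx0 : (0:ℝ) < x := hx
  positivity
/-- With a `Gamma(a,b)` prior for `λ` under both models and a uniform prior for `p`,
the Bayes factor of the ZIP model against the Poisson model for a sample of `n`
counts with `k` zeros and total count `s` equals
`(k!/(n+1)!) Σ_{j=0}^k ((n−j)!/(k−j)!) (1 − j/(n+b))^{−(s+a)}`,
and both marginal integrals are finite. -/
theorem zip_gamma_bayes_factor (n k s : ℕ) (a b : ℝ) (hn : 1 ≤ n) (hk : k ≤ n)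
    (ha : 0 < a) (hb : 0 < b) :
    let g : ℝ → ℝ := fun l => b ^ a * Real.exp (-b * l) * l ^ (a - 1) / Real.Gamma a
    let I1 : ℝ≥0∞ := ∫⁻ l in Set.Ioi (0 : ℝ), ∫⁻ p in Set.Ioc (0 : ℝ) 1,
      ENNReal.ofReal ((p + (1 - p) * Real.exp (-l)) ^ k * (1 - p) ^ (n - k) *
        Real.exp (-((n : ℝ) - (k : ℝ)) * l) * l ^ s * g l)
    let I0 : ℝ≥0∞ := ∫⁻ l in Set.Ioi (0 : ℝ),
      ENNReal.ofReal (Real.exp (-(n : ℝ) * l) * l ^ s * g l)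
    I1 ≠ ⊤ ∧ I0 ≠ ⊤ ∧
      I1 / I0 = ENNReal.ofReal (((Nat.factorial k : ℝ) / (Nat.factorial (n + 1) : ℝ)) *
        ∑ j ∈ Finset.range (k + 1),
          ((Nat.factorial (n - j) : ℝ) / (Nat.factorial (k - j) : ℝ)) *
            (1 - (j : ℝ) / ((n : ℝ) + b)) ^ (-((s : ℝ) + a))) := by
  intro g I1 I0
  have hGa : 0 < Real.Gamma a := Real.Gamma_pos_of_pos ha
  set t : ℝ := (s : ℝ) + a with ht_def
  have ht : 0 < t := by positivity
  have hGt : 0 < Real.Gamma t := Real.Gamma_pos_of_pos ht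
  set B : ℝ := b ^ a / Real.Gamma a with hB_def
  have hB : 0 < B := by positivity
  -- the key Gamma-integral computation
  have key : ∀ c : ℝ, 0 ≤ c →
      (∫⁻ x in Ioi (0:ℝ), ENNReal.ofReal (Real.exp (-c * x) * x ^ s * g x))
        = ENNReal.ofReal (B * ((1/(c+b)) ^ t * Real.Gamma t)) := by
    intro c hc
    have hcb : 0 < c + b := by linarith
    calc ∫⁻ x in Ioi (0:ℝ), ENNReal.ofReal (Real.exp (-c*x) * x ^ s * g x)
        = ∫⁻ x in Ioi (0:ℝ), ENNReal.ofReal (B * (x ^ (t-1) * Real.exp (-((c+b)*x)))) := by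
          refine setLIntegral_congr_fun measurableSet_Ioi (fun x hx => ?_)
          have hx0 : (0:ℝ) < x := hx
          congr 1
          simp only [g, hB_def]
          rw [show t - 1 = (s:ℝ) + (a-1) by rw [ht_def]; ring, Real.rpow_add hx0,
            Real.rpow_natCast, show -((c+b)*x) = -c*x + -b*x by ring, Real.exp_add]
          field_simp
      _ = ENNReal.ofReal B * ∫⁻ x in Ioi (0:ℝ), ENNReal.ofReal (x ^ (t-1) * Real.exp (-((c+b)*x))) := by
          simp_rw [ENNReal.ofReal_mul hB.le]
          rw [lintegral_const_mul' _ _ ENNReal.ofReal_ne_top]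
      _ = ENNReal.ofReal B * ENNReal.ofReal ((1/(c+b)) ^ t * Real.Gamma t) := by
          rw [glint ht hcb]
      _ = ENNReal.ofReal (B * ((1/(c+b)) ^ t * Real.Gamma t)) := (ENNReal.ofReal_mul hB.le).symm
  have hI0 : I0 = ENNReal.ofReal (B * ((1/((n:ℝ)+b)) ^ t * Real.Gamma t)) := key (n:ℝ) (by positivity)
  -- coefficients
  set c : ℕ → ℝ := fun j => (k.factorial * (n-j).factorial : ℝ) / ((n+1).factorial * (k-j).factorial)
    with hc_def
  have hc : ∀ j, 0 ≤ c j := fun j => by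
    simp only [hc_def]; positivity
  set v : ℕ → ℝ := fun j => c j * (B * ((1/((((n-j:ℕ)):ℝ)+b)) ^ t * Real.Gamma t)) with hv_def
  have hv : ∀ j, 0 ≤ v j := fun j => by
    have h1 : (0:ℝ) < (((n-j:ℕ)):ℝ) + b := by positivity
    have := hc j
    simp only [hv_def]
    positivity
  -- inner integral computation, for fixed l > 0
  have hinner : ∀ l : ℝ, 0 < l →
      (∫⁻ p in Set.Ioc (0 : ℝ) 1,
        ENNReal.ofReal ((p + (1 - p) * Real.exp (-l)) ^ k * (1 - p) ^ (n - k) *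
          Real.exp (-((n : ℝ) - (k : ℝ)) * l) * l ^ s * g l))
      = ENNReal.ofReal (∑ j ∈ Finset.range (k+1),
          c j * Real.exp (-l) ^ (k-j) * (Real.exp (-((n : ℝ) - (k : ℝ)) * l) * l ^ s * g l)) := by
    intro l hl
    set E : ℝ := Real.exp (-l) with hE_def
    have hE : 0 < E := Real.exp_pos _
    set C : ℝ := Real.exp (-((n : ℝ) - (k : ℝ)) * l) * l ^ s * g l with hC_def
    have hgl : 0 ≤ g l := by
      simp only [g]; positivity
    have hC : 0 ≤ C := by
      simp only [hC_def]
      have h1 : 0 ≤ Real.exp (-((n : ℝ) - (k : ℝ)) * l) := (Real.exp_pos _).le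
      have h2 : (0:ℝ) ≤ l ^ s := by positivity
      exact mul_nonneg (mul_nonneg h1 h2) hgl
    have hre : ∀ p : ℝ, (p + (1 - p) * E) ^ k * (1 - p) ^ (n - k) *
          Real.exp (-((n : ℝ) - (k : ℝ)) * l) * l ^ s * g l
        = ((p + (1 - p) * E) ^ k * (1 - p) ^ (n - k)) * C := fun p => by
      simp only [hC_def]; ring
    calc (∫⁻ p in Set.Ioc (0 : ℝ) 1,
        ENNReal.ofReal ((p + (1 - p) * E) ^ k * (1 - p) ^ (n - k) *
          Real.exp (-((n : ℝ) - (k : ℝ)) * l) * l ^ s * g l))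
        = ∫⁻ p in Set.Ioc (0 : ℝ) 1,
            ENNReal.ofReal (((p + (1 - p) * E) ^ k * (1 - p) ^ (n - k)) * C) := by
          exact lintegral_congr fun p => by rw [hre p]
      _ = ENNReal.ofReal (∫ p in Set.Ioc (0:ℝ) 1, ((p + (1 - p) * E) ^ k * (1 - p) ^ (n - k)) * C) := by
          rw [← ofReal_integral_eq_lintegral_ofReal]
          · exact (Continuous.integrableOn_Ioc (by fun_prop))
          · filter_upwards [ae_restrict_mem measurableSet_Ioc] with p hp
            have h1 : (0:ℝ) ≤ 1 - p := by linarith [hp.2]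
            have h2 : (0:ℝ) ≤ p + (1 - p) * E := by nlinarith [hp.1, hE]
            have h3 : (0:ℝ) ≤ (p + (1 - p) * E) ^ k * (1 - p) ^ (n - k) :=
              mul_nonneg (pow_nonneg h2 k) (pow_nonneg h1 _)
            exact mul_nonneg h3 hC
      _ = ENNReal.ofReal ((∫ p in Set.Ioc (0:ℝ) 1, (p + (1 - p) * E) ^ k * (1 - p) ^ (n - k)) * C) := by
          rw [MeasureTheory.integral_mul_const]
      _ = ENNReal.ofReal ((∑ j ∈ Finset.range (k+1), c j * E ^ (k-j)) * C) := by
          rw [← intervalIntegral.integral_of_le zero_le_one, inner_int n k hk E]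
      _ = ENNReal.ofReal (∑ j ∈ Finset.range (k+1), c j * E ^ (k-j) * C) := by
          rw [Finset.sum_mul]
  -- combine exponentials
  have hexp : ∀ j ∈ Finset.range (k+1), ∀ l : ℝ,
      c j * Real.exp (-l) ^ (k-j) * (Real.exp (-((n : ℝ) - (k : ℝ)) * l) * l ^ s * g l)
        = c j * (Real.exp (-(((n-j:ℕ)):ℝ) * l) * l ^ s * g l) := by
    intro j hj l
    have hj' : j ≤ k := Nat.lt_succ_iff.mp (Finset.mem_range.mp hj)
    have h1 : Real.exp (-l) ^ (k-j) * Real.exp (-((n:ℝ)-(k:ℝ))*l)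
        = Real.exp (-(((n-j:ℕ)):ℝ) * l) := by
      rw [← Real.exp_nat_mul, ← Real.exp_add]
      congr 1
      rw [Nat.cast_sub (hj'.trans hk), Nat.cast_sub hj']
      ring
    calc c j * Real.exp (-l) ^ (k-j) * (Real.exp (-((n : ℝ) - (k : ℝ)) * l) * l ^ s * g l)
        = c j * ((Real.exp (-l) ^ (k-j) * Real.exp (-((n:ℝ)-(k:ℝ))*l)) * l ^ s * g l) := by ring
      _ = c j * (Real.exp (-(((n-j:ℕ)):ℝ) * l) * l ^ s * g l) := by rw [h1]
  -- compute I1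
  have hI1 : I1 = ENNReal.ofReal (∑ j ∈ Finset.range (k+1), v j) := by
    have step1 : I1 = ∫⁻ l in Ioi (0:ℝ),
        ∑ j ∈ Finset.range (k+1),
          ENNReal.ofReal (c j * (Real.exp (-(((n-j:ℕ)):ℝ) * l) * l ^ s * g l)) := by
      refine setLIntegral_congr_fun measurableSet_Ioi (fun l hl => ?_)
      rw [hinner l hl]
      rw [Finset.sum_congr rfl (fun j hj => hexp j hj l)]
      refine ENNReal.ofReal_sum_of_nonneg fun j hj => ?_
      have hgl : 0 ≤ g l := by
        have hl0 : (0:ℝ) < l := hl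
        simp only [g]; positivity
      have hl0 : (0:ℝ) < l := hl
      have h2 : (0:ℝ) ≤ l ^ s := by positivity
      have h3 : (0:ℝ) ≤ Real.exp (-(((n-j:ℕ)):ℝ) * l) := (Real.exp_pos _).le
      exact mul_nonneg (hc j) (mul_nonneg (mul_nonneg h3 h2) hgl)
    rw [step1, lintegral_finset_sum]
    · have hterm : ∀ j ∈ Finset.range (k+1),
          (∫⁻ l in Ioi (0:ℝ), ENNReal.ofReal (c j * (Real.exp (-(((n-j:ℕ)):ℝ) * l) * l ^ s * g l)))
            = ENNReal.ofReal (v j) := by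
        intro j hj
        simp_rw [ENNReal.ofReal_mul (hc j)]
        rw [lintegral_const_mul' _ _ ENNReal.ofReal_ne_top, key (((n-j:ℕ)):ℝ) (by positivity),
          ← ENNReal.ofReal_mul (hc j)]
      rw [Finset.sum_congr rfl hterm]
      exact (ENNReal.ofReal_sum_of_nonneg fun j _ => hv j).symm
    · intro j hj
      apply Measurable.ennreal_ofReal
      simp only [g]
      fun_prop
  -- final computation
  have hw : 0 < B * ((1/((n:ℝ)+b)) ^ t * Real.Gamma t) := by
    have h1 : (0:ℝ) < (n:ℝ) + b := by positivity
    positivity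
  refine ⟨by rw [hI1]; exact ENNReal.ofReal_ne_top, by rw [hI0]; exact ENNReal.ofReal_ne_top, ?_⟩
  rw [hI1, hI0, ← ENNReal.ofReal_div_of_pos hw]
  congr 1
  rw [Finset.sum_div, Finset.mul_sum]
  refine Finset.sum_congr rfl fun j hj => ?_
  have hj' : j ≤ k := Nat.lt_succ_iff.mp (Finset.mem_range.mp hj)
  have hnb : (0:ℝ) < (n:ℝ) + b := by positivity
  have hdj : (0:ℝ) < (((n-j:ℕ)):ℝ) + b := by positivity
  have hcast : (((n-j:ℕ)):ℝ) = (n:ℝ) - (j:ℝ) := by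
    rw [Nat.cast_sub (hj'.trans hk)]
  have hfrac : 1 - (j:ℝ)/((n:ℝ)+b) = ((((n-j:ℕ)):ℝ) + b)/((n:ℝ)+b) := by
    rw [hcast]; field_simp; ring
  have hrw : (1 - (j:ℝ)/((n:ℝ)+b)) ^ (-t)
      = (1/((((n-j:ℕ)):ℝ)+b)) ^ t / (1/((n:ℝ)+b)) ^ t := by
    rw [hfrac, Real.rpow_neg (by positivity),
      ← Real.div_rpow (by positivity) (by positivity), ← Real.inv_rpow (by positivity)]
    congr 1
    field_simp
  rw [hrw]
  have hX : (0:ℝ) < (1/((((n-j:ℕ)):ℝ)+b)) ^ t := Real.rpow_pos_of_pos (by positivity) t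
  have hY : (0:ℝ) < (1/((n:ℝ)+b)) ^ t := Real.rpow_pos_of_pos (by positivity) t
  have hkf : ((k.factorial : ℝ)) ≠ 0 := by exact_mod_cast Nat.factorial_ne_zero _
  have hn1f : (((n+1).factorial : ℝ)) ≠ 0 := by exact_mod_cast Nat.factorial_ne_zero _
  have hkjf : (((k-j).factorial : ℝ)) ≠ 0 := by exact_mod_cast Nat.factorial_ne_zero _
  simp only [hv_def, hc_def]
  field_simp
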